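/- Let q be a prime power, k ≥ 0, and M a matroid. If ε(M/e) ≤ (q^{r(M)+k-1} - 1)/(q-1) - q·(q^{2k}-1)/(q²-1) for some nonloop e, every line of M through e has at most q² + 1 points, and at most (q^{2k}-1)/(q²-1) lines through e have more than q + 1 points, then ε(M) ≤ (q^{r(M)+k} - 1)/(q-1) + q·(q^{2k}-1)/(q²-1). -/

import Mathlib

open Matroid Set

namespace GrowthRate

variable {α : Type*}

/-- The rank of a set in a matroid: the supremum of cardinalities of independent subsets. -/
noncomputable def eRk (M : Matroid α) (X : Set α) : ℕ∞ :=
  ⨆ I ∈ {I : Set α | M.Indep I ∧ I ⊆ X}, I.encard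

/-- The rank of a matroid. -/
noncomputable def eRank (M : Matroid α) : ℕ∞ := eRk M M.E

/-- Rank as a natural number (for finite matroids). -/
noncomputable def rk (M : Matroid α) (X : Set α) : ℕ := (eRk M X).toNat

/-- Rank of a matroid as a natural number. -/
noncomputable def rank (M : Matroid α) : ℕ := (eRank M).toNat

/-- Deletion of a set of elements. -/
noncomputable def delete (M : Matroid α) (D : Set α) : Matroid α := M ↾ (M.E \ D)

/-- Contraction of a set of elements, defined via duality. -/
noncomputable def contract (M : Matroid α) (C : Set α) : Matroid α := (delete M✶ C)✶

/-- `N` is a minor of `M` if it is obtained by a contraction followed by a deletion. -/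
def IsMinor (N M : Matroid α) : Prop := ∃ C D : Set α, N = delete (contract M C) D

/-- The number of points (rank-one flats) of `M` contained in `X`. -/
noncomputable def nPoints (M : Matroid α) (X : Set α) : ℕ :=
  {P : Set α | M.IsFlat P ∧ eRk M P = 1 ∧ P ⊆ X}.ncard

/-- `ε(M)`: the number of points (rank-one flats) of `M`. -/
noncomputable def eps (M : Matroid α) : ℕ := {P : Set α | M.IsFlat P ∧ eRk M P = 1}.ncard

/-- A matroid is simple if all singletons and pairs of ground elements are independent. -/
def Simple (M : Matroid α) : Prop :=
  ∀ e ∈ M.E, ∀ f ∈ M.E, M.Indep {e} ∧ (e ≠ f → M.Indep {e, f})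

/-- `M` has a `U_{2,m}`-minor: a minor that is simple of rank two with `m` elements. -/
def HasUnifLineMinor (M : Matroid α) (m : ℕ) : Prop :=
  ∃ N : Matroid α, IsMinor N M ∧ eRank N = 2 ∧ Simple N ∧ N.E.encard = m

/-- A matroid is weakly round if its ground set is not the union of a set of rank
at most `r(M)-2` and a set of rank at most `r(M)-1`. -/
def WeaklyRound (M : Matroid α) : Prop :=
  ¬ ∃ A B : Set α, A ∪ B = M.E ∧ eRk M A + 2 ≤ eRank M ∧ eRk M B + 1 ≤ eRank M

/-- `q` is a prime power. -/
def IsPrimePower (q : ℕ) : Prop := ∃ p n : ℕ, p.Prime ∧ 0 < n ∧ q = p ^ n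

/-- `M` is isomorphic to the projective geometry `PG(n-1, |F|)` over the finite field `F`:
there is a representation `f` of `M` by vectors in `F^n` such that distinct elements get
non-parallel vectors and every direction in `F^n` is represented. -/
def IsPG (M : Matroid α) (F : Type) [Field F] [Fintype F] (n : ℕ) : Prop :=
  ∃ f : α → (Fin n → F),
    (∀ I ⊆ M.E, (M.Indep I ↔ LinearIndependent F (fun x : I => f x))) ∧
    (∀ e ∈ M.E, ∀ e' ∈ M.E, ∀ c : F, f e' = c • f e → e = e') ∧
    (∀ v : Fin n → F, v ≠ 0 → ∃ e ∈ M.E, ∃ c : F, c ≠ 0 ∧ v = c • f e)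

/-- `M` is `(q,k)`-overfull. -/
noncomputable def Overfull (M : Matroid α) (q k : ℕ) : Prop :=
  ((q : ℚ) ^ (rank M + k) - 1) / ((q : ℚ) - 1)
      - (q : ℚ) * ((q : ℚ) ^ (2 * k) - 1) / ((q : ℚ) ^ 2 - 1) < (eps M : ℚ)

variable {M : Matroid α} {I J X Y P L F : Set α} {e a x : α}

section eRkBasics

lemma encard_le_eRk (hI : M.Indep I) (hIX : I ⊆ X) : I.encard ≤ eRk M X :=
  le_iSup₂ (f := fun (I : Set α) (_ : I ∈ {I : Set α | M.Indep I ∧ I ⊆ X}) => I.encard)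
    I ⟨hI, hIX⟩

lemma eRk_le_iff {n : ℕ∞} : eRk M X ≤ n ↔ ∀ I, M.Indep I → I ⊆ X → I.encard ≤ n := by
  simp only [eRk, iSup₂_le_iff, mem_setOf_eq, and_imp]

lemma eRk_eq_of_basis' (hI : M.IsBasis' I X) : eRk M X = I.encard := by
  refine le_antisymm (eRk_le_iff.2 fun J hJ hJX => ?_) (encard_le_eRk hI.indep hI.subset)
  obtain ⟨J', hJ', hJJ'⟩ := hJ.subset_isBasis'_of_subset hJX
  exact (encard_mono hJJ').trans (hJ'.encard_eq_encard hI).le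

lemma eRk_eq_of_basis (hI : M.IsBasis I X) : eRk M X = I.encard := eRk_eq_of_basis' hI.isBasis'

lemma eRk_self_of_indep (hI : M.Indep I) : eRk M I = I.encard := eRk_eq_of_basis hI.isBasis_self

lemma eRk_closure_eq (M : Matroid α) (X : Set α) : eRk M (M.closure X) = eRk M X := by
  obtain ⟨I, hI⟩ := M.exists_isBasis' X
  rw [eRk_eq_of_basis' hI, eRk_eq_of_basis hI.isBasis_closure_right]

lemma eRk_mono (h : X ⊆ Y) : eRk M X ≤ eRk M Y :=
  eRk_le_iff.2 fun I hI hIX => encard_le_eRk hI (hIX.trans h)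

end eRkBasics

section Flats

lemma closure_flat (M : Matroid α) (X : Set α) : M.IsFlat (M.closure X) := by
  rw [Matroid.closure_def, sInter_eq_iInter]
  have : Nonempty {F // F ∈ {F | M.IsFlat F ∧ X ∩ M.E ⊆ F}} :=
    ⟨⟨M.E, M.ground_isFlat, inter_subset_right⟩⟩
  exact Matroid.IsFlat.iInter fun F => F.2.1

/-- A point containing a nonloop equals the closure of that nonloop. -/
lemma point_eq_closure_nonloop (hP : M.IsFlat P) (hr : eRk M P = 1) (haP : a ∈ P)
    (hai : M.Indep {a}) : P = M.closure {a} := by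
  refine subset_antisymm (fun x hx => ?_) ?_
  · by_contra hxc
    have hxa : x ∉ ({a} : Set α) := by
      intro h
      exact hxc (M.subset_closure {a} (singleton_subset_iff.2 (hP.subset_ground haP)) h)
    have hxE : x ∈ M.E := hP.subset_ground hx
    have hind : M.Indep (insert x {a}) :=
      (hai.insert_indep_iff_of_notMem hxa).2 ⟨hxE, hxc⟩
    have hle : (insert x ({a} : Set α)).encard ≤ eRk M P :=
      encard_le_eRk hind (insert_subset hx (singleton_subset_iff.2 haP))
    rw [hr, encard_insert_of_notMem hxa, encard_singleton] at hle
    norm_num at hle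
  · have := M.closure_subset_closure (singleton_subset_iff.2 haP)
    rwa [hP.closure] at this

lemma point_exists_nonloop (hP : M.IsFlat P) (hr : eRk M P = 1) :
    ∃ a ∈ P, M.Indep {a} ∧ P = M.closure {a} := by
  obtain ⟨I, hI⟩ := M.exists_isBasis' P
  have h1 : I.encard = 1 := by rw [← eRk_eq_of_basis' hI, hr]
  obtain ⟨a, rfl⟩ := encard_eq_one.1 h1
  exact ⟨a, hI.subset rfl, hI.indep,
    point_eq_closure_nonloop hP hr (hI.subset rfl) hI.indep⟩

/-- The closure of a nonloop is a point. -/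
lemma closure_nonloop_point (hai : M.Indep {a}) :
    M.IsFlat (M.closure {a}) ∧ eRk M (M.closure {a}) = 1 := by
  refine ⟨closure_flat M _, ?_⟩
  rw [eRk_closure_eq, eRk_self_of_indep hai, encard_singleton]

/-- For a point `P` not containing the nonloop `e`, `closure (insert e P)` is a line
through `e` containing `P`. -/
lemma line_of_point (hP : M.IsFlat P) (hr : eRk M P = 1) (heP : e ∉ P) (heE : e ∈ M.E)
    (hel : M.Indep {e}) :
    M.IsFlat (M.closure (insert e P)) ∧ eRk M (M.closure (insert e P)) = 2 ∧
      e ∈ M.closure (insert e P) ∧ P ⊆ M.closure (insert e P) := by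
  obtain ⟨a, haP, hai, rfl⟩ := point_exists_nonloop hP hr
  have hea : e ∉ ({a} : Set α) := by
    rintro rfl
    exact heP haP
  have hind : M.Indep (insert e {a}) :=
    (hai.insert_indep_iff_of_notMem hea).2 ⟨heE, heP⟩
  have hcc : M.closure (insert e (M.closure {a})) = M.closure (insert e {a}) :=
    M.closure_insert_closure_eq_closure_insert e {a}
  refine ⟨closure_flat M _, ?_, ?_, ?_⟩
  · rw [hcc, eRk_closure_eq, eRk_self_of_indep hind, encard_insert_of_notMem hea,
      encard_singleton]
    rfl
  · exact M.mem_closure_of_mem' (mem_insert e _) heE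
  · exact M.subset_closure_of_subset' (subset_insert e _) (closure_flat M _).subset_ground

end Flats

section Contract

@[simp] lemma contract_ground (M : Matroid α) (C : Set α) :
    (contract M C).E = M.E \ C := by
  simp [contract, delete]

lemma contract_elem_indep_iff (hel : M.Indep {e}) {I : Set α} :
    (contract M {e}).Indep I ↔ e ∉ I ∧ M.Indep (insert e I) := by
  have hDE : (delete M✶ {e}).E = M.E \ {e} := by simp [delete]
  rw [contract, Matroid.dual_indep_iff_exists']
  constructor
  · rintro ⟨hIE, B, hB, hdj⟩
    rw [hDE] at hIE
    -- B is a base of M✶ contained in M.E \ {e}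
    rw [delete, Matroid.isBase_restrict_iff'] at hB
    rw [Matroid.dual_ground] at hB
    have hBss : B ⊆ M.E \ {e} := hB.subset
    obtain ⟨B₀, hB₀, heB₀⟩ := hel.exists_isBase_superset
    have hB₀c : M✶.IsBase (M.E \ B₀) := hB₀.compl_isBase_dual
    have hB₀ss : M.E \ B₀ ⊆ M.E \ {e} :=
      diff_subset_diff_right heB₀
    have hBbase : M✶.IsBase B :=
      ((hB.isBasis_inter_ground).isBase_of_isBase_subset hB₀c
        (subset_inter hB₀ss (diff_subset)))
    have hBc : M.IsBase (M.E \ B) := hBbase.compl_isBase_of_dual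
    have heI : e ∉ I := fun h => (hIE h).2 rfl
    refine ⟨heI, hBc.indep.subset ?_⟩
    refine insert_subset ⟨(Matroid.Indep.subset_ground hel) rfl, fun h => (hBss h).2 rfl⟩
      fun x hx => ⟨(hIE hx).1, fun hxB => (hdj.ne_of_mem hx hxB) rfl⟩
  · rintro ⟨heI, hind⟩
    obtain ⟨B', hB', hssB'⟩ := hind.exists_isBase_superset
    have heB' : e ∈ B' := hssB' (mem_insert e I)
    have hIB' : I ⊆ B' := (subset_insert e I).trans hssB'
    have hIE : I ⊆ M.E := fun x hx => hB'.subset_ground (hIB' hx)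
    refine ⟨by rw [hDE]; exact fun x hx => ⟨hIE hx, fun h => heI (h ▸ hx)⟩,
      M.E \ B', ?_, ?_⟩
    · rw [delete, Matroid.isBase_restrict_iff', Matroid.dual_ground]
      have hBc : M✶.IsBase (M.E \ B') := hB'.compl_isBase_dual
      have hss : M.E \ B' ⊆ M.E \ {e} :=
        diff_subset_diff_right (singleton_subset_iff.2 heB')
      have hgr : (M.E \ {e} : Set α) ⊆ M✶.E := by
        rw [Matroid.dual_ground]; exact diff_subset
      rw [Matroid.isBasis'_iff_isBasis hgr, Matroid.isBasis_iff hgr]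
      exact ⟨hBc.indep, hss, fun J hJ hBJ _ => hBc.eq_of_subset_indep hJ hBJ⟩
    · exact disjoint_left.2 fun x hx hxc => hxc.2 (hIB' hx)

/-- If `L` is a line of `M` through the nonloop `e`, then `L \ {e}` is a point of
`M / e`. -/
lemma line_contract_point (hel : M.Indep {e}) (hL : M.IsFlat L) (hL2 : eRk M L = 2)
    (heL : e ∈ L) :
    (contract M {e}).IsFlat (L \ {e}) ∧ eRk (contract M {e}) (L \ {e}) = 1 := by
  set N := contract M {e} with hN
  -- find `a` with `{e, a}` a basis of `L`
  obtain ⟨I, hI, heI⟩ := hel.subset_isBasis_of_subset (singleton_subset_iff.2 heL)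
    hL.subset_ground
  have hI2 : I.encard = 2 := by rw [← eRk_eq_of_basis hI, hL2]
  obtain ⟨u, v, huv, rfl⟩ := encard_eq_two.1 hI2
  have heuv : e = u ∨ e = v := by simpa using heI rfl
  obtain ⟨a, hae, hIea⟩ : ∃ a, a ≠ e ∧ ({u, v} : Set α) = {e, a} := by
    rcases heuv with rfl | rfl
    · exact ⟨v, fun h => huv h.symm, rfl⟩
    · exact ⟨u, fun h => huv h, Set.pair_comm u e⟩
  rw [hIea] at hI
  have hind : M.Indep {e, a} := hI.indep
  have haL : a ∈ L := hI.subset (by simp)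
  have haN : N.Indep {a} := by
    rw [hN, contract_elem_indep_iff hel]
    exact ⟨fun h => hae (mem_singleton_iff.1 h).symm, hind⟩
  have hsub : L \ {e} ⊆ N.E := by
    rw [hN, contract_ground]
    exact diff_subset_diff_left hL.subset_ground
  have haLe : a ∈ L \ {e} := ⟨haL, by simpa using hae⟩
  -- rank bound
  have hbound : ∀ J, N.Indep J → J ⊆ L \ {e} → J.encard ≤ 1 := by
    intro J hJ hJL
    rw [hN, contract_elem_indep_iff hel] at hJ
    have hins : (insert e J).encard ≤ 2 := by
      rw [← hL2]
      exact encard_le_eRk hJ.2 (insert_subset heL (hJL.trans diff_subset))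
    rw [encard_insert_of_notMem hJ.1] at hins
    have h21 : (2 : ℕ∞) = 1 + 1 := rfl
    rw [h21, ENat.add_le_add_iff_right (by simp : (1:ℕ∞) ≠ ⊤)] at hins
    exact hins
  have hrk : eRk N (L \ {e}) = 1 := by
    refine le_antisymm (eRk_le_iff.2 hbound) ?_
    simpa using encard_le_eRk haN (singleton_subset_iff.2 haLe)
  -- `{a}` is a basis of `L \ {e}` in `N`
  have hbasis : N.IsBasis {a} (L \ {e}) := by
    rw [Matroid.isBasis_iff hsub]
    refine ⟨haN, singleton_subset_iff.2 haLe, fun J hJ haJ hJL => ?_⟩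
    have hle := hbound J hJ hJL
    have hfin : J.Finite := Set.finite_of_encard_le_coe (k := 1) (by exact_mod_cast hle)
    exact Set.Finite.eq_of_subset_of_encard_le' hfin haJ (by simpa using hle)
  -- closure computation
  have hclo : N.closure (L \ {e}) = L \ {e} := by
    refine subset_antisymm (fun x hx => ?_) (N.subset_closure _ hsub)
    have hxE : x ∈ N.E := N.mem_ground_of_mem_closure hx
    have hxE' : x ∈ M.E ∧ x ≠ e := by
      rw [hN, contract_ground] at hxE
      exact ⟨hxE.1, fun h => hxE.2 (by simp [h])⟩
    by_cases hxa : x = a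
    · exact hxa ▸ haLe
    have hxL : x ∈ L := by
      by_contra hxL
      rw [← hbasis.closure_eq_closure] at hx
      have hdep : N.Dep (insert x {a}) :=
        (haN.mem_closure_iff_of_notMem (by simpa using hxa)).1 hx
      have hnind : ¬ M.Indep (insert x {e, a}) := by
        intro hcon
        refine hdep.not_indep ?_
        rw [hN, contract_elem_indep_iff hel]
        refine ⟨by simp [Ne.symm hxE'.2, Ne.symm hae], ?_⟩
        have : insert e (insert x ({a} : Set α)) = insert x ({e, a} : Set α) := by
          rw [Set.insert_comm]
        rwa [this]
      have hxmem : x ∈ M.closure {e, a} := by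
        by_contra hxc
        exact hnind ((hind.insert_indep_iff_of_notMem
          (by simp [hxE'.2, hxa])).2 ⟨hxE'.1, hxc⟩)
      rw [hI.closure_eq_closure, hL.closure] at hxmem
      exact hxL hxmem
    exact ⟨hxL, by simpa using hxE'.2⟩
  exact ⟨hclo ▸ closure_flat N (L \ {e}), hrk⟩

end Contract

section Counting

/-- The main counting inequality: points of `M` are distributed among the lines through
a nonloop `e`, of which there are at most `ε(M/e)`. -/
lemma main_count (q : ℕ) [M.Finite] (he : e ∈ M.E) (hel : M.Indep {e})
    (h2 : ∀ L : Set α, M.IsFlat L → eRk M L = 2 → e ∈ L → nPoints M L ≤ q ^ 2 + 1) :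
    eps M ≤ 1 + q * eps (contract M {e}) +
      (q ^ 2 - q) *
        {L : Set α | M.IsFlat L ∧ eRk M L = 2 ∧ e ∈ L ∧ q + 1 < nPoints M L}.ncard := by
  classical
  set N := contract M {e} with hN
  set P0 := M.closure {e} with hP0
  have hEfin := M.ground_finite
  have hPts : {P : Set α | M.IsFlat P ∧ eRk M P = 1}.Finite :=
    hEfin.finite_subsets.subset fun P hP => hP.1.subset_ground
  have hLines : {L : Set α | M.IsFlat L ∧ eRk M L = 2 ∧ e ∈ L}.Finite :=
    hEfin.finite_subsets.subset fun L hL => hL.1.subset_ground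
  have hNE : N.E.Finite := by
    rw [hN, contract_ground]
    exact hEfin.subset diff_subset
  have hNpts : {P : Set α | N.IsFlat P ∧ eRk N P = 1}.Finite :=
    hNE.finite_subsets.subset fun P hP => hP.1.subset_ground
  have hBigfin : {L : Set α | M.IsFlat L ∧ eRk M L = 2 ∧ e ∈ L ∧ q + 1 < nPoints M L}.Finite :=
    hLines.subset fun L hL => ⟨hL.1, hL.2.1, hL.2.2.1⟩
  set PF : Finset (Set α) := hPts.toFinset with hPF
  set LF : Finset (Set α) := hLines.toFinset with hLF
  set P0F : Finset (Set α) := PF.erase P0 with hP0F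
  have hPnot : ∀ P ∈ P0F, M.IsFlat P ∧ eRk M P = 1 ∧ e ∉ P := by
    intro P hP
    rw [hP0F, Finset.mem_erase, hPF, Set.Finite.mem_toFinset] at hP
    obtain ⟨hne, hPt⟩ := hP
    exact ⟨hPt.1, hPt.2, fun heP => hne (point_eq_closure_nonloop hPt.1 hPt.2 heP hel)⟩
  have hmaps : ∀ P ∈ P0F, M.closure (insert e P) ∈ LF := by
    intro P hP
    obtain ⟨h1', h2', h3'⟩ := hPnot P hP
    obtain ⟨hf, hr, heL, -⟩ := line_of_point h1' h2' h3' he hel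
    rw [hLF, Set.Finite.mem_toFinset]
    exact ⟨hf, hr, heL⟩
  -- Step 1 : distribute the points other than `P0` among the lines through `e`
  have hcard1 : P0F.card ≤ ∑ L ∈ LF, (nPoints M L - 1) := by
    have hsub : P0F ⊆
        LF.biUnion (fun L => P0F.filter (fun P => M.closure (insert e P) = L)) := by
      intro P hP
      rw [Finset.mem_biUnion]
      exact ⟨_, hmaps P hP, Finset.mem_filter.2 ⟨hP, rfl⟩⟩
    refine (Finset.card_le_card hsub).trans (Finset.card_biUnion_le.trans ?_)
    refine Finset.sum_le_sum fun L hL => ?_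
    rw [hLF, Set.Finite.mem_toFinset] at hL
    have hPL : {P : Set α | M.IsFlat P ∧ eRk M P = 1 ∧ P ⊆ L}.Finite :=
      hEfin.finite_subsets.subset fun P hP => hP.1.subset_ground
    have hfsub : P0F.filter (fun P => M.closure (insert e P) = L) ⊆
        hPL.toFinset.erase P0 := by
      intro P hP
      rw [Finset.mem_filter] at hP
      obtain ⟨hPmem, hPcl⟩ := hP
      obtain ⟨h1', h2', h3'⟩ := hPnot P hPmem
      refine Finset.mem_erase.2 ⟨(Finset.mem_erase.1 hPmem).1, ?_⟩
      rw [Set.Finite.mem_toFinset]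
      refine ⟨h1', h2', ?_⟩
      have h := M.subset_closure_of_subset' (subset_insert e P) h1'.subset_ground
      rwa [hPcl] at h
    have hP0mem : P0 ∈ hPL.toFinset := by
      rw [Set.Finite.mem_toFinset]
      obtain ⟨hfl, hrk⟩ := closure_nonloop_point hel
      refine ⟨hfl, hrk, ?_⟩
      have h := M.closure_subset_closure (singleton_subset_iff.2 hL.2.2)
      rwa [hL.1.closure] at h
    have hle := Finset.card_le_card hfsub
    rw [Finset.card_erase_of_mem hP0mem] at hle
    refine hle.trans ?_
    rw [nPoints, Set.ncard_eq_toFinset_card _ hPL]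
  -- Step 2 : bound the contribution of each line
  have hcard2 : ∑ L ∈ LF, (nPoints M L - 1) ≤
      q * LF.card + (q ^ 2 - q) * (LF.filter (fun L => q + 1 < nPoints M L)).card := by
    have hstep : ∑ L ∈ LF, (nPoints M L - 1) ≤
        ∑ L ∈ LF, (if q + 1 < nPoints M L then q ^ 2 else q) := by
      refine Finset.sum_le_sum fun L hL => ?_
      rw [hLF, Set.Finite.mem_toFinset] at hL
      have hub := h2 L hL.1 hL.2.1 hL.2.2
      by_cases hbig : q + 1 < nPoints M L
      · rw [if_pos hbig]; omega
      · rw [if_neg hbig]; omega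
    refine hstep.trans ?_
    rw [Finset.sum_ite, Finset.sum_const, Finset.sum_const, smul_eq_mul, smul_eq_mul]
    have hqq : q ≤ q ^ 2 := by nlinarith
    have hBS := Finset.card_filter_add_card_filter_not
      (s := LF) (p := fun L => q + 1 < nPoints M L)
    set B := (LF.filter (fun L => q + 1 < nPoints M L)).card
    set S := (LF.filter (fun L => ¬ (q + 1 < nPoints M L))).card
    have : B * q ^ 2 = q * B + (q ^ 2 - q) * B := by
      rw [mul_comm B (q ^ 2), ← Nat.add_mul]
      congr 1
      omega
    rw [this]
    have : S * q = q * S := mul_comm _ _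
    rw [this]
    have : q * B + (q ^ 2 - q) * B + q * S = q * (B + S) + (q ^ 2 - q) * B := by ring
    rw [this, hBS]
  -- Step 3 : there are at most `ε(M/e)` lines through `e`
  have hcard3 : LF.card ≤ eps N := by
    rw [eps, Set.ncard_eq_toFinset_card _ hNpts]
    refine Finset.card_le_card_of_injOn (fun L => L \ {e}) ?_ ?_
    · intro L hL
      rw [hLF, Finset.mem_coe, Set.Finite.mem_toFinset] at hL
      rw [Finset.mem_coe, Set.Finite.mem_toFinset]
      exact line_contract_point hel hL.1 hL.2.1 hL.2.2
    · intro L1 h1 L2 h2' hEq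
      rw [Finset.mem_coe, hLF, Set.Finite.mem_toFinset] at h1 h2'
      have key : ∀ L : Set α, e ∈ L → insert e (L \ {e}) = L := fun L hLe => by
        rw [Set.insert_diff_singleton, insert_eq_self.2 hLe]
      rw [← key L1 h1.2.2, ← key L2 h2'.2.2]
      simp only at hEq
      rw [hEq]
  -- Step 4 : identify the big-lines count
  have hBigF : (LF.filter (fun L => q + 1 < nPoints M L)).card =
      {L : Set α | M.IsFlat L ∧ eRk M L = 2 ∧ e ∈ L ∧ q + 1 < nPoints M L}.ncard := by
    rw [Set.ncard_eq_toFinset_card _ hBigfin]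
    congr 1
    ext L
    rw [Finset.mem_filter, hLF, Set.Finite.mem_toFinset, Set.Finite.mem_toFinset]
    simp only [mem_setOf_eq]
    tauto
  -- assemble
  have hepsM : eps M = P0F.card + 1 := by
    rw [eps, Set.ncard_eq_toFinset_card _ hPts, hP0F, ← hPF]
    have hP0PF : P0 ∈ PF := by
      rw [hPF, Set.Finite.mem_toFinset]
      exact closure_nonloop_point hel
    rw [Finset.card_erase_of_mem hP0PF]
    have : 1 ≤ PF.card := Finset.card_pos.2 ⟨P0, hP0PF⟩
    omega
  rw [hepsM, ← hBigF]
  have hchain := hcard1.trans hcard2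
  have hmul : q * LF.card ≤ q * eps N := Nat.mul_le_mul_left q hcard3
  linarith

end Counting

lemma one_le_rank [M.Finite] (hel : M.Indep {e}) : 1 ≤ rank M := by
  have h1 : (1 : ℕ∞) ≤ eRank M := by
    have h := encard_le_eRk hel hel.subset_ground
    rwa [encard_singleton] at h
  have hne : eRank M ≠ ⊤ := by
    have hle : eRank M ≤ M.E.encard := eRk_le_iff.2 fun I _ hIE => encard_mono hIE
    exact (hle.trans_lt M.ground_finite.encard_lt_top).ne
  obtain ⟨n, hn⟩ := WithTop.ne_top_iff_exists.1 hne
  show 1 ≤ (eRank M).toNat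
  rw [← hn] at h1 ⊢
  have h1' : (1 : ℕ∞) ≤ (n : ℕ∞) := h1
  show 1 ≤ ENat.toNat (n : ℕ∞)
  rw [ENat.toNat_coe]
  exact_mod_cast h1'

/-- The counting calculation of Lemma `criticallines`: if `ε(M/e)` is small, every
line through `e` has at most `q²+1` points, and at most `(q^(2k)-1)/(q²-1)` lines
through `e` have more than `q+1` points, then `ε(M)` is suitably bounded. -/
theorem statement_7 {α : Type*} (q k : ℕ) (hq : IsPrimePower q)
    (M : Matroid α) [M.Finite] (e : α) (he : e ∈ M.E) (hel : M.Indep {e})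
    (h1 : (eps (contract M {e}) : ℚ) ≤
      ((q : ℚ) ^ (rank M + k - 1) - 1) / ((q : ℚ) - 1)
        - (q : ℚ) * ((q : ℚ) ^ (2 * k) - 1) / ((q : ℚ) ^ 2 - 1))
    (h2 : ∀ L : Set α, M.IsFlat L → eRk M L = 2 → e ∈ L → nPoints M L ≤ q ^ 2 + 1)
    (h3 : (({L : Set α | M.IsFlat L ∧ eRk M L = 2 ∧ e ∈ L ∧ q + 1 < nPoints M L}).ncard : ℚ)
        ≤ ((q : ℚ) ^ (2 * k) - 1) / ((q : ℚ) ^ 2 - 1)) :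
    (eps M : ℚ) ≤ ((q : ℚ) ^ (rank M + k) - 1) / ((q : ℚ) - 1)
        + (q : ℚ) * ((q : ℚ) ^ (2 * k) - 1) / ((q : ℚ) ^ 2 - 1) := by
  classical
  obtain ⟨p, n, hp, hn, hqe⟩ := hq
  have hq2 : 2 ≤ q := by
    subst hqe
    calc 2 ≤ p := hp.two_le
    _ ≤ p ^ n := Nat.le_self_pow hn.ne' p
  have hq2' : (2 : ℚ) ≤ (q : ℚ) := by exact_mod_cast hq2
  have hqq : q ≤ q ^ 2 := by nlinarith
  have hr : 1 ≤ rank M := one_le_rank hel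
  rw [mul_div_assoc] at h1 ⊢
  set A : ℚ := ((q : ℚ) ^ (2 * k) - 1) / ((q : ℚ) ^ 2 - 1) with hA
  have hden : (0 : ℚ) < (q : ℚ) ^ 2 - 1 := by nlinarith
  have hnum : (0 : ℚ) ≤ (q : ℚ) ^ (2 * k) - 1 := by
    have h := one_le_pow₀ (a := (q : ℚ)) (by linarith) (n := 2 * k)
    linarith
  have hA0 : 0 ≤ A := div_nonneg hnum hden.le
  have hq1 : ((q : ℚ) - 1) ≠ 0 := sub_ne_zero.2 (by linarith)
  -- the counting bound
  have hc0 := main_count q he hel h2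
  have hc : (eps M : ℚ) ≤ 1 + (q : ℚ) * (eps (contract M {e}) : ℚ) +
      ((q : ℚ) ^ 2 - (q : ℚ)) *
        (({L : Set α | M.IsFlat L ∧ eRk M L = 2 ∧ e ∈ L ∧ q + 1 < nPoints M L}).ncard : ℚ) := by
    have hcast := (Nat.cast_le (α := ℚ)).2 hc0
    push_cast [Nat.cast_sub hqq] at hcast
    exact hcast
  -- the key power identity
  have key : (q : ℚ) * (((q : ℚ) ^ (rank M + k - 1) - 1) / ((q : ℚ) - 1)) =
      ((q : ℚ) ^ (rank M + k) - 1) / ((q : ℚ) - 1) - 1 := by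
    have hpow : (q : ℚ) ^ (rank M + k - 1) * (q : ℚ) = (q : ℚ) ^ (rank M + k) := by
      rw [← pow_succ]
      congr 1
      omega
    field_simp
    linear_combination hpow
  have m1 : (q : ℚ) * (eps (contract M {e}) : ℚ) ≤
      (q : ℚ) * (((q : ℚ) ^ (rank M + k - 1) - 1) / ((q : ℚ) - 1)) - (q : ℚ) * ((q : ℚ) * A) := by
    have := mul_le_mul_of_nonneg_left h1 (by linarith : (0 : ℚ) ≤ (q : ℚ))
    linarith [this]
  have m2 : ((q : ℚ) ^ 2 - (q : ℚ)) *
      (({L : Set α | M.IsFlat L ∧ eRk M L = 2 ∧ e ∈ L ∧ q + 1 < nPoints M L}).ncard : ℚ) ≤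
      ((q : ℚ) ^ 2 - (q : ℚ)) * A :=
    mul_le_mul_of_nonneg_left h3 (by nlinarith)
  have hqA : 0 ≤ (q : ℚ) * A := mul_nonneg (by linarith) hA0
  nlinarith [hc, m1, m2, key, hqA]


end GrowthRate
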